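/- Let Q ≥ 1 be an integer and let θ, ψ be real numbers with e^{iQψ} = 1, e^{iψ} ≠ 1, e^{iθ} ≠ 1 and e^{iθ} ≠ e^{iψ}. Define S(θ, ψ) = Σ_{q=0}^{Q−1} Σ_{q'=0}^{Q−1−q} ( e^{iq'ψ} e^{iqθ} + e^{i(q+q')ψ} e^{−iqθ} ) − Σ_{q=0}^{Q−1} e^{iqψ}. Then S(θ, ψ) = (1 − e^{iQθ})² / ( (1 − e^{iθ}) (e^{iψ} − e^{iθ}) e^{i(Q−1)θ} ). -/

import Mathlib

noncomputable section

/-- The double sum `S(θ,ψ)` of the paper: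
`S = Σ_{q=0}^{Q−1} Σ_{q'=0}^{Q−1−q} (e^{iq'ψ}e^{iqθ} + e^{i(q+q')ψ}e^{−iqθ}) − Σ_{q=0}^{Q−1} e^{iqψ}`. -/
def Ssum (Q : ℕ) (θ ψ : ℝ) : ℂ :=
  (∑ q ∈ Finset.range Q, ∑ q' ∈ Finset.range (Q - q),
      (Complex.exp (((q' : ℝ) * ψ : ℝ) * Complex.I) *
          Complex.exp (((q : ℝ) * θ : ℝ) * Complex.I) +
        Complex.exp ((((q : ℝ) + (q' : ℝ)) * ψ : ℝ) * Complex.I) *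
          Complex.exp ((-((q : ℝ) * θ) : ℝ) * Complex.I))) -
    ∑ q ∈ Finset.range Q, Complex.exp (((q : ℝ) * ψ : ℝ) * Complex.I)

set_option maxHeartbeats 1000000 in
lemma ssum_aux (Q : ℕ) (hQ : 1 ≤ Q) (a b : ℂ) (ha0 : a ≠ 0) (hb0 : b ≠ 0)
    (hbQ : b ^ Q = 1) (hψ : b ≠ 1) (hθ : a ≠ 1) (hθψ : a ≠ b) :
    (∑ q ∈ Finset.range Q, ∑ q' ∈ Finset.range (Q - q),
      (b ^ q' * a ^ q + b ^ q * b ^ q' * (a⁻¹) ^ q)) - ∑ q ∈ Finset.range Q, b ^ q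
    = (1 - a ^ Q) ^ 2 / ((1 - a) * (b - a) * (a ^ Q * a⁻¹)) := by
  have hbm1 : b - 1 ≠ 0 := sub_ne_zero.mpr hψ
  have hsum : (∑ q ∈ Finset.range Q, ∑ q' ∈ Finset.range (Q - q),
      (b ^ q' * a ^ q + b ^ q * b ^ q' * (a⁻¹) ^ q))
      = ∑ q ∈ Finset.range Q,
        (((a * b⁻¹) ^ q + (a⁻¹) ^ q - a ^ q - (b * a⁻¹) ^ q) / (b - 1)) := by
    apply Finset.sum_congr rfl
    intro q hq
    rw [Finset.mem_range] at hq
    have hinner : ∀ q' ∈ Finset.range (Q - q),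
        b ^ q' * a ^ q + b ^ q * b ^ q' * (a⁻¹) ^ q
        = b ^ q' * (a ^ q + b ^ q * (a⁻¹) ^ q) := by
      intro q' _; ring
    rw [Finset.sum_congr rfl hinner, ← Finset.sum_mul, geom_sum_eq hψ]
    have hQq : b ^ (Q - q) = (b ^ q)⁻¹ := by
      have h : b ^ (Q - q) * b ^ q = 1 := by
        rw [← pow_add, Nat.sub_add_cancel hq.le, hbQ]
      field_simp at h ⊢
      linear_combination h
    rw [hQq]
    have hbq : (b : ℂ) ^ q ≠ 0 := pow_ne_zero _ hb0
    rw [div_mul_eq_mul_div, div_eq_div_iff hbm1 hbm1]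
    simp only [mul_pow, inv_pow]
    field_simp
    ring
  rw [hsum, ← Finset.sum_div]
  have hs1 : ∑ q ∈ Finset.range Q, ((a * b⁻¹) ^ q + (a⁻¹) ^ q - a ^ q - (b * a⁻¹) ^ q)
      = (∑ q ∈ Finset.range Q, (a * b⁻¹) ^ q) + (∑ q ∈ Finset.range Q, (a⁻¹) ^ q)
        - (∑ q ∈ Finset.range Q, a ^ q) - (∑ q ∈ Finset.range Q, (b * a⁻¹) ^ q) := by
    simp [Finset.sum_add_distrib, Finset.sum_sub_distrib]
  have hab1 : a * b⁻¹ ≠ 1 := by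
    intro h; apply hθψ; field_simp at h; exact h
  have hai1 : a⁻¹ ≠ 1 := fun h => hθ (inv_eq_one.mp h)
  have hba1 : b * a⁻¹ ≠ 1 := by
    intro h; apply hθψ; field_simp at h; exact h.symm
  rw [hs1, geom_sum_eq hab1, geom_sum_eq hai1, geom_sum_eq hθ, geom_sum_eq hba1, geom_sum_eq hψ, hbQ]
  have hA1 : (a * b⁻¹) ^ Q = a ^ Q := by rw [mul_pow, inv_pow, hbQ]; field_simp
  have hA2 : (a⁻¹) ^ Q = (a ^ Q)⁻¹ := by rw [inv_pow]
  have hA3 : (b * a⁻¹) ^ Q = (a ^ Q)⁻¹ := by rw [mul_pow, inv_pow, hbQ]; field_simp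
  rw [hA1, hA2, hA3]
  obtain ⟨A, hA⟩ : ∃ A, a ^ Q = A := ⟨_, rfl⟩
  rw [hA]
  have hA0 : A ≠ 0 := hA ▸ pow_ne_zero _ ha0
  have ham1 : a - 1 ≠ 0 := sub_ne_zero.mpr hθ
  have h1 : a * b⁻¹ - 1 ≠ 0 := sub_ne_zero.mpr hab1
  have h2 : a⁻¹ - 1 ≠ 0 := sub_ne_zero.mpr hai1
  have h3 : b * a⁻¹ - 1 ≠ 0 := sub_ne_zero.mpr hba1
  have h4 : (1 : ℂ) - a ≠ 0 := sub_ne_zero.mpr (Ne.symm hθ)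
  have h5 : b - a ≠ 0 := sub_ne_zero.mpr (Ne.symm hθψ)
  have h6 : a - b ≠ 0 := sub_ne_zero.mpr hθψ
  have e1 : (A - 1) / (a * b⁻¹ - 1) = b * (A - 1) / (a - b) := by
    rw [div_eq_div_iff h1 h6]; field_simp
  have e2 : (A⁻¹ - 1) / (a⁻¹ - 1) = a * (1 - A) / (A * (1 - a)) := by
    rw [div_eq_div_iff h2 (mul_ne_zero hA0 h4)]; field_simp
  have e3 : (A⁻¹ - 1) / (b * a⁻¹ - 1) = a * (1 - A) / (A * (b - a)) := by
    rw [div_eq_div_iff h3 (mul_ne_zero hA0 h5)]; field_simp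
  rw [e1, e2, e3, sub_self, zero_div, sub_zero]
  have hd1 : A * (1 - a) ≠ 0 := mul_ne_zero hA0 h4
  have hd2 : A * (b - a) ≠ 0 := mul_ne_zero hA0 h5
  have eN : b * (A - 1) / (a - b) + a * (1 - A) / (A * (1 - a)) - (A - 1) / (a - 1)
      - a * (1 - A) / (A * (b - a))
      = (1 - A) ^ 2 * (b - 1) * a / ((1 - a) * (b - a) * A) := by
    rw [div_add_div _ _ h6 hd1, div_sub_div _ _ (mul_ne_zero h6 hd1) ham1,
      div_sub_div _ _ (mul_ne_zero (mul_ne_zero h6 hd1) ham1) hd2,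
      div_eq_div_iff (mul_ne_zero (mul_ne_zero (mul_ne_zero h6 hd1) ham1) hd2)
        (mul_ne_zero (mul_ne_zero h4 h5) hA0)]
    ring
  rw [eN, div_div, div_eq_div_iff
      (mul_ne_zero (mul_ne_zero (mul_ne_zero h4 h5) hA0) hbm1)
      (mul_ne_zero (mul_ne_zero h4 h5) (mul_ne_zero hA0 (inv_ne_zero ha0)))]
  field_simp

/-- Closed form for `S(θ,ψ)` when `e^{iQψ} = 1`, `e^{iψ} ≠ 1`, `e^{iθ} ≠ 1`,
`e^{iθ} ≠ e^{iψ}`. -/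
theorem stmt15 (Q : ℕ) (hQ : 1 ≤ Q) (θ ψ : ℝ)
    (hQψ : Complex.exp (((Q : ℝ) * ψ : ℝ) * Complex.I) = 1)
    (hψ : Complex.exp ((ψ : ℂ) * Complex.I) ≠ 1)
    (hθ : Complex.exp ((θ : ℂ) * Complex.I) ≠ 1)
    (hθψ : Complex.exp ((θ : ℂ) * Complex.I) ≠ Complex.exp ((ψ : ℂ) * Complex.I)) :
    Ssum Q θ ψ =
      (1 - Complex.exp (((Q : ℝ) * θ : ℝ) * Complex.I)) ^ 2 /
        ((1 - Complex.exp ((θ : ℂ) * Complex.I)) *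
          (Complex.exp ((ψ : ℂ) * Complex.I) - Complex.exp ((θ : ℂ) * Complex.I)) *
          Complex.exp ((((Q : ℝ) - 1) * θ : ℝ) * Complex.I)) := by
  have epow : ∀ (x : ℝ) (n : ℕ), Complex.exp (((n : ℝ) * x : ℝ) * Complex.I)
      = Complex.exp ((x : ℂ) * Complex.I) ^ n := by
    intro x n
    rw [← Complex.exp_nat_mul]
    push_cast
    ring_nf
  have eneg : ∀ q : ℕ, Complex.exp ((-((q : ℝ) * θ) : ℝ) * Complex.I)
      = (Complex.exp ((θ : ℂ) * Complex.I))⁻¹ ^ q := by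
    intro q
    rw [inv_pow, ← epow, ← Complex.exp_neg]
    push_cast
    ring_nf
  have eadd : ∀ q q' : ℕ, Complex.exp ((((q : ℝ) + (q' : ℝ)) * ψ : ℝ) * Complex.I)
      = Complex.exp ((ψ : ℂ) * Complex.I) ^ q * Complex.exp ((ψ : ℂ) * Complex.I) ^ q' := by
    intro q q'
    rw [← pow_add, show ((q : ℝ) + (q' : ℝ)) = (((q + q' : ℕ) : ℝ)) by push_cast; ring, epow]
  have hS : Ssum Q θ ψ =
      (∑ q ∈ Finset.range Q, ∑ q' ∈ Finset.range (Q - q),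
        (Complex.exp ((ψ : ℂ) * Complex.I) ^ q' * Complex.exp ((θ : ℂ) * Complex.I) ^ q +
          Complex.exp ((ψ : ℂ) * Complex.I) ^ q * Complex.exp ((ψ : ℂ) * Complex.I) ^ q' *
            (Complex.exp ((θ : ℂ) * Complex.I))⁻¹ ^ q)) -
      ∑ q ∈ Finset.range Q, Complex.exp ((ψ : ℂ) * Complex.I) ^ q := by
    unfold Ssum
    congr 1
    · apply Finset.sum_congr rfl
      intro q _
      apply Finset.sum_congr rfl
      intro q' _
      rw [epow, epow, eneg, eadd]
    · exact Finset.sum_congr rfl fun q _ => epow ψ q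
  have hexpQ1 : Complex.exp ((((Q : ℝ) - 1) * θ : ℝ) * Complex.I)
      = Complex.exp ((θ : ℂ) * Complex.I) ^ Q * (Complex.exp ((θ : ℂ) * Complex.I))⁻¹ := by
    have h : ((((Q : ℝ) - 1) * θ : ℝ) : ℂ) * Complex.I
        = (((Q : ℝ) * θ : ℝ) : ℂ) * Complex.I - (θ : ℂ) * Complex.I := by
      push_cast; ring
    rw [h, Complex.exp_sub, epow, div_eq_mul_inv]
  rw [hS, epow θ Q, hexpQ1]
  exact ssum_aux Q hQ _ _ (Complex.exp_ne_zero _) (Complex.exp_ne_zero _)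
    (by rw [← epow]; exact hQψ) hψ hθ hθψ

end
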